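/- Let 𝕂 be ℝ or ℂ, V a finite-dimensional 𝕂-vector space, S : V × V → 𝕂 a symmetric bilinear map and Ŝ : V³ → 𝕂 a symmetric trilinear map (invariant under all permutations of its arguments). Define the 5-linear maps S⊗Ŝ : (v₁,…,v₅) ↦ S(v₁,v₂)·Ŝ(v₃,v₄,v₅) and Ŝ⊗S : (v₁,…,v₅) ↦ Ŝ(v₁,v₂,v₃)·S(v₄,v₅). Then y_{t'}*(S⊗Ŝ) = y_{t'}*(Ŝ⊗S), and both equal the 5-linear map (w,x,y,z,u) ↦ 4·( S(w,z)·Ŝ(x,y,u) − S(x,z)·Ŝ(w,y,u) + S(x,y)·Ŝ(w,z,u) − S(w,y)·Ŝ(x,z,u) ). -/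

import Mathlib

/-- The action of a group-algebra element `a ∈ 𝕂[S_r]` on an `r`-linear map:
`(aT)(v₁,…,v_r) = Σ_p a(p)·T(v_{p(1)},…,v_{p(r)})`. -/
noncomputable def gaAct {𝕂 : Type*} [RCLike 𝕂] {V : Type*} [AddCommGroup V] [Module 𝕂 V]
    {r : ℕ} (a : MonoidAlgebra 𝕂 (Equiv.Perm (Fin r)))
    (T : MultilinearMap 𝕂 (fun _ : Fin r => V) 𝕂) :
    MultilinearMap 𝕂 (fun _ : Fin r => V) 𝕂 :=
  ∑ p : Equiv.Perm (Fin r), a.coeff p • T.domDomCongr p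

/-- The star map `a = Σ_p a(p)·p ↦ a* = Σ_p a(p)·p⁻¹` on the group algebra. -/
noncomputable def gaStar {𝕂 : Type*} [RCLike 𝕂] {r : ℕ}
    (a : MonoidAlgebra 𝕂 (Equiv.Perm (Fin r))) : MonoidAlgebra 𝕂 (Equiv.Perm (Fin r)) :=
  ∑ p : Equiv.Perm (Fin r), MonoidAlgebra.single p⁻¹ (a.coeff p)

/-- The horizontal group `H_{t'}` of the tableau `t'` with rows `(1,3,5)` and `(2,4)`
(0-based: rows `{0,2,4}` and `{1,3}`): all permutations mapping each row to itself. -/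
def horizT' : Finset (Equiv.Perm (Fin 5)) :=
  Finset.univ.filter fun p =>
    (∀ i ∈ ({0, 2, 4} : Finset (Fin 5)), p i ∈ ({0, 2, 4} : Finset (Fin 5))) ∧
    (∀ i ∈ ({1, 3} : Finset (Fin 5)), p i ∈ ({1, 3} : Finset (Fin 5)))

/-- The vertical group `V_{t'}` of `t'`: all permutations mapping each of the columns
`{1,2}` and `{3,4}` (0-based `{0,1}`, `{2,3}`) to itself and fixing `5` (0-based `4`). -/
def vertT' : Finset (Equiv.Perm (Fin 5)) :=
  Finset.univ.filter fun p =>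
    (∀ i ∈ ({0, 1} : Finset (Fin 5)), p i ∈ ({0, 1} : Finset (Fin 5))) ∧
    (∀ i ∈ ({2, 3} : Finset (Fin 5)), p i ∈ ({2, 3} : Finset (Fin 5))) ∧
    p 4 = 4

/-- The Young symmetrizer `y_{t'} = Σ_{p∈H_{t'}} Σ_{q∈V_{t'}} sign(q)·(p∘q)`. -/
noncomputable def youngT' (𝕂 : Type*) [RCLike 𝕂] : MonoidAlgebra 𝕂 (Equiv.Perm (Fin 5)) :=
  ∑ p ∈ horizT', ∑ q ∈ vertT',
    MonoidAlgebra.single (p * q) (((Equiv.Perm.sign q : ℤ) : 𝕂))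


lemma gaStar_apply {𝕂 : Type*} [RCLike 𝕂] {r : ℕ}
    (a : MonoidAlgebra 𝕂 (Equiv.Perm (Fin r))) (g : Equiv.Perm (Fin r)) :
    (gaStar a).coeff g = a.coeff g⁻¹ := by
  unfold gaStar
  rw [MonoidAlgebra.coeff_sum, Finset.sum_apply']
  simp only [MonoidAlgebra.single_apply]
  have : ∀ x : Equiv.Perm (Fin r), (if x⁻¹ = g then a.coeff x else 0) = if x = g⁻¹ then a.coeff x else 0 := by
    intro x
    exact if_congr (by constructor <;> intro h <;> subst h <;> simp) rfl rfl
  rw [Finset.sum_congr rfl (fun x _ => this x)]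
  simp

lemma gaAct_apply {𝕂 : Type*} [RCLike 𝕂] {V : Type*} [AddCommGroup V] [Module 𝕂 V]
    {r : ℕ} (a : MonoidAlgebra 𝕂 (Equiv.Perm (Fin r)))
    (T : MultilinearMap 𝕂 (fun _ : Fin r => V) 𝕂) (v : Fin r → V) :
    gaAct a T v = ∑ p : Equiv.Perm (Fin r), a.coeff p * T (fun i => v (p i)) := by
  unfold gaAct
  rw [MultilinearMap.sum_apply]
  simp [MultilinearMap.smul_apply, MultilinearMap.domDomCongr_apply, smul_eq_mul]

lemma key {𝕂 : Type*} [RCLike 𝕂] {V : Type*} [AddCommGroup V] [Module 𝕂 V]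
    (T : MultilinearMap 𝕂 (fun _ : Fin 5 => V) 𝕂) (v : Fin 5 → V) :
    gaAct (gaStar (youngT' 𝕂)) T v =
      ∑ p ∈ horizT', ∑ q ∈ vertT',
        (((Equiv.Perm.sign q : ℤ) : 𝕂)) * T (fun i => v ((p * q)⁻¹ i)) := by
  rw [gaAct_apply]
  have hy : ∀ g : Equiv.Perm (Fin 5), (youngT' 𝕂).coeff g⁻¹ =
      ∑ p ∈ horizT', ∑ q ∈ vertT',
        (if p * q = g⁻¹ then ((Equiv.Perm.sign q : ℤ) : 𝕂) else 0) := by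
    intro g
    unfold youngT'
    rw [MonoidAlgebra.coeff_sum, Finset.sum_apply']
    refine Finset.sum_congr rfl fun p _ => ?_
    rw [MonoidAlgebra.coeff_sum, Finset.sum_apply']
    exact Finset.sum_congr rfl fun q _ => by rw [MonoidAlgebra.single_apply]
  calc ∑ g : Equiv.Perm (Fin 5), (gaStar (youngT' 𝕂)).coeff g * T (fun i => v (g i))
      = ∑ g : Equiv.Perm (Fin 5), ∑ p ∈ horizT', ∑ q ∈ vertT',
          (if p * q = g⁻¹ then ((Equiv.Perm.sign q : ℤ) : 𝕂) else 0) * T (fun i => v (g i)) := by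
        refine Finset.sum_congr rfl fun g _ => ?_
        rw [gaStar_apply, hy g, Finset.sum_mul]
        exact Finset.sum_congr rfl fun p _ => by rw [Finset.sum_mul]
    _ = ∑ p ∈ horizT', ∑ q ∈ vertT', ∑ g : Equiv.Perm (Fin 5),
          (if p * q = g⁻¹ then ((Equiv.Perm.sign q : ℤ) : 𝕂) else 0) * T (fun i => v (g i)) := by
        rw [Finset.sum_comm]
        exact Finset.sum_congr rfl fun p _ => Finset.sum_comm
    _ = _ := by
        refine Finset.sum_congr rfl fun p _ => Finset.sum_congr rfl fun q _ => ?_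
        have : ∀ g : Equiv.Perm (Fin 5),
            (if p * q = g⁻¹ then ((Equiv.Perm.sign q : ℤ) : 𝕂) else 0) * T (fun i => v (g i)) =
            if g = (p * q)⁻¹ then ((Equiv.Perm.sign q : ℤ) : 𝕂) * T (fun i => v (g i)) else 0 := by
          intro g
          rw [ite_mul, zero_mul]
          exact if_congr ⟨fun h => by rw [h]; simp, fun h => by subst h; simp⟩ rfl rfl
        rw [Finset.sum_congr rfl fun g _ => this g, Finset.sum_ite_eq']
        simp

open Equiv in
def hList : List (Equiv.Perm (Fin 5)) :=
  [1, swap 0 2, swap 0 4, swap 2 4, swap 0 2 * swap 2 4, swap 2 4 * swap 0 2,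
   swap 1 3, swap 0 2 * swap 1 3, swap 0 4 * swap 1 3, swap 2 4 * swap 1 3,
   swap 0 2 * swap 2 4 * swap 1 3, swap 2 4 * swap 0 2 * swap 1 3]

open Equiv in
def vList : List (Equiv.Perm (Fin 5)) :=
  [1, swap 0 1, swap 2 3, swap 0 1 * swap 2 3]

lemma main1 {𝕂 : Type*} [RCLike 𝕂] {V : Type*} [AddCommGroup V] [Module 𝕂 V]
    (S : MultilinearMap 𝕂 (fun _ : Fin 2 => V) 𝕂)
    (hS : ∀ x y : V, S ![x, y] = S ![y, x])
    (Shat : MultilinearMap 𝕂 (fun _ : Fin 3 => V) 𝕂)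
    (hShat : ∀ (σ : Equiv.Perm (Fin 3)) (v : Fin 3 → V), Shat (fun i => v (σ i)) = Shat v)
    (T : MultilinearMap 𝕂 (fun _ : Fin 5 => V) 𝕂)
    (hT : ∀ v : Fin 5 → V, T v = S ![v 0, v 1] * Shat ![v 2, v 3, v 4])
    (v : Fin 5 → V) :
    gaAct (gaStar (youngT' 𝕂)) T v =
      4 * (S ![v 0, v 3] * Shat ![v 1, v 2, v 4] - S ![v 1, v 3] * Shat ![v 0, v 2, v 4]
        + S ![v 1, v 2] * Shat ![v 0, v 3, v 4] - S ![v 0, v 2] * Shat ![v 1, v 3, v 4]) := by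
  have g0 : ∀ a b : V, S ![b, a] = S ![a, b] := fun a b => hS b a
  have gg : ∀ (σ : Equiv.Perm (Fin 3)) (a b c : V),
      Shat ![(![a,b,c]) (σ 0), (![a,b,c]) (σ 1), (![a,b,c]) (σ 2)] = Shat ![a, b, c] := by
    intro σ a b c
    rw [← hShat σ ![a, b, c]]
    congr 1
    funext i
    fin_cases i <;> rfl
  have g1 : ∀ a b c : V, Shat ![b, a, c] = Shat ![a, b, c] := fun a b c =>
    gg (Equiv.swap 0 1) a b c
  have g2 : ∀ a b c : V, Shat ![a, c, b] = Shat ![a, b, c] := fun a b c =>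
    gg (Equiv.swap 1 2) a b c
  have g3 : ∀ a b c : V, Shat ![c, b, a] = Shat ![a, b, c] := fun a b c =>
    gg (Equiv.swap 0 2) a b c
  have g4 : ∀ a b c : V, Shat ![b, c, a] = Shat ![a, b, c] := fun a b c => (g2 b a c).trans (g1 a b c)
  have g5 : ∀ a b c : V, Shat ![c, a, b] = Shat ![a, b, c] := fun a b c => (g1 a c b).trans (g2 a b c)
  rw [key]
  have hv : ∀ f : Equiv.Perm (Fin 5) → 𝕂, ∑ q ∈ vertT', f q = (vList.map f).sum := by
    intro f
    rw [show vertT' = vList.toFinset from by decide, List.sum_toFinset _ (by decide)]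
  have hh : ∀ f : Equiv.Perm (Fin 5) → 𝕂, ∑ p ∈ horizT', f p = (hList.map f).sum := by
    intro f
    rw [show horizT' = hList.toFinset from by decide, List.sum_toFinset _ (by decide)]
  rw [hh]
  simp only [hv, hList, vList, List.map_cons, List.map_nil, List.sum_cons, List.sum_nil, hT]
  simp only [show Equiv.Perm.sign (1 : Equiv.Perm (Fin 5)) = 1 from by decide,
    show Equiv.Perm.sign (Equiv.swap (0:Fin 5) 1) = -1 from by decide,
    show Equiv.Perm.sign (Equiv.swap (2:Fin 5) 3) = -1 from by decide,
    show Equiv.Perm.sign (Equiv.swap (0:Fin 5) 1 * Equiv.swap 2 3) = 1 from by decide]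
  simp only [mul_inv_rev, Equiv.swap_inv, inv_one,
    Equiv.Perm.mul_apply, Equiv.Perm.one_apply, Equiv.swap_apply_def]
  simp only [Fin.isValue, Fin.reduceEq, reduceIte, reduceCtorEq]
  simp only [Units.val_one, Units.val_neg, Int.cast_one, Int.cast_neg, one_mul, neg_one_mul,
    add_zero]
  simp only [g0, g1, g2, g3, g4, g5]
  ring

lemma main2 {𝕂 : Type*} [RCLike 𝕂] {V : Type*} [AddCommGroup V] [Module 𝕂 V]
    (S : MultilinearMap 𝕂 (fun _ : Fin 2 => V) 𝕂)
    (hS : ∀ x y : V, S ![x, y] = S ![y, x])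
    (Shat : MultilinearMap 𝕂 (fun _ : Fin 3 => V) 𝕂)
    (hShat : ∀ (σ : Equiv.Perm (Fin 3)) (v : Fin 3 → V), Shat (fun i => v (σ i)) = Shat v)
    (T : MultilinearMap 𝕂 (fun _ : Fin 5 => V) 𝕂)
    (hT : ∀ v : Fin 5 → V, T v = Shat ![v 0, v 1, v 2] * S ![v 3, v 4])
    (v : Fin 5 → V) :
    gaAct (gaStar (youngT' 𝕂)) T v =
      4 * (S ![v 0, v 3] * Shat ![v 1, v 2, v 4] - S ![v 1, v 3] * Shat ![v 0, v 2, v 4]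
        + S ![v 1, v 2] * Shat ![v 0, v 3, v 4] - S ![v 0, v 2] * Shat ![v 1, v 3, v 4]) := by
  have g0 : ∀ a b : V, S ![b, a] = S ![a, b] := fun a b => hS b a
  have gg : ∀ (σ : Equiv.Perm (Fin 3)) (a b c : V),
      Shat ![(![a,b,c]) (σ 0), (![a,b,c]) (σ 1), (![a,b,c]) (σ 2)] = Shat ![a, b, c] := by
    intro σ a b c
    rw [← hShat σ ![a, b, c]]
    congr 1
    funext i
    fin_cases i <;> rfl
  have g1 : ∀ a b c : V, Shat ![b, a, c] = Shat ![a, b, c] := fun a b c =>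
    gg (Equiv.swap 0 1) a b c
  have g2 : ∀ a b c : V, Shat ![a, c, b] = Shat ![a, b, c] := fun a b c =>
    gg (Equiv.swap 1 2) a b c
  have g3 : ∀ a b c : V, Shat ![c, b, a] = Shat ![a, b, c] := fun a b c =>
    gg (Equiv.swap 0 2) a b c
  have g4 : ∀ a b c : V, Shat ![b, c, a] = Shat ![a, b, c] := fun a b c => (g2 b a c).trans (g1 a b c)
  have g5 : ∀ a b c : V, Shat ![c, a, b] = Shat ![a, b, c] := fun a b c => (g1 a c b).trans (g2 a b c)
  rw [key]
  have hv : ∀ f : Equiv.Perm (Fin 5) → 𝕂, ∑ q ∈ vertT', f q = (vList.map f).sum := by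
    intro f
    rw [show vertT' = vList.toFinset from by decide, List.sum_toFinset _ (by decide)]
  have hh : ∀ f : Equiv.Perm (Fin 5) → 𝕂, ∑ p ∈ horizT', f p = (hList.map f).sum := by
    intro f
    rw [show horizT' = hList.toFinset from by decide, List.sum_toFinset _ (by decide)]
  rw [hh]
  simp only [hv, hList, vList, List.map_cons, List.map_nil, List.sum_cons, List.sum_nil, hT]
  simp only [show Equiv.Perm.sign (1 : Equiv.Perm (Fin 5)) = 1 from by decide,
    show Equiv.Perm.sign (Equiv.swap (0:Fin 5) 1) = -1 from by decide,
    show Equiv.Perm.sign (Equiv.swap (2:Fin 5) 3) = -1 from by decide,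
    show Equiv.Perm.sign (Equiv.swap (0:Fin 5) 1 * Equiv.swap 2 3) = 1 from by decide]
  simp only [mul_inv_rev, Equiv.swap_inv, inv_one,
    Equiv.Perm.mul_apply, Equiv.Perm.one_apply, Equiv.swap_apply_def]
  simp only [Fin.isValue, Fin.reduceEq, reduceIte, reduceCtorEq]
  simp only [Units.val_one, Units.val_neg, Int.cast_one, Int.cast_neg, one_mul, neg_one_mul,
    add_zero]
  simp only [g0, g1, g2, g3, g4, g5]
  ring

/-- For `S` symmetric bilinear and `Shat` symmetric trilinear, with `T₁ = S⊗Shat` and `T₂ = Shat⊗S`,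
one has `y_{t'}*(S⊗Shat) = y_{t'}*(Shat⊗S)` and both are given by the explicit 4-term formula. -/
theorem stmt2 {𝕂 : Type*} [RCLike 𝕂] {V : Type*} [AddCommGroup V] [Module 𝕂 V]
    [FiniteDimensional 𝕂 V]
    (S : MultilinearMap 𝕂 (fun _ : Fin 2 => V) 𝕂)
    (hS : ∀ x y : V, S ![x, y] = S ![y, x])
    (Shat : MultilinearMap 𝕂 (fun _ : Fin 3 => V) 𝕂)
    (hShat : ∀ (σ : Equiv.Perm (Fin 3)) (v : Fin 3 → V), Shat (fun i => v (σ i)) = Shat v)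
    (T₁ T₂ : MultilinearMap 𝕂 (fun _ : Fin 5 => V) 𝕂)
    (hT₁ : ∀ v : Fin 5 → V, T₁ v = S ![v 0, v 1] * Shat ![v 2, v 3, v 4])
    (hT₂ : ∀ v : Fin 5 → V, T₂ v = Shat ![v 0, v 1, v 2] * S ![v 3, v 4]) :
    gaAct (gaStar (youngT' 𝕂)) T₁ = gaAct (gaStar (youngT' 𝕂)) T₂ ∧
    ∀ w x y z u : V,
      gaAct (gaStar (youngT' 𝕂)) T₁ ![w, x, y, z, u] =
        4 * (S ![w, z] * Shat ![x, y, u] - S ![x, z] * Shat ![w, y, u]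
          + S ![x, y] * Shat ![w, z, u] - S ![w, y] * Shat ![x, z, u]) := by
  constructor
  · exact MultilinearMap.ext fun v => by
      rw [main1 S hS Shat hShat T₁ hT₁ v, main2 S hS Shat hShat T₂ hT₂ v]
  · intro w x y z u
    have h := main1 S hS Shat hShat T₁ hT₁ ![w, x, y, z, u]
    simpa using h
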